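/- arXiv:1109.0712 — 3 statements merged into one kernel-verified Lean document; each statement's English description precedes it below -/
import Mathlib

section
/- Let m be real-analytic on an open interval J, n continuous and nonvanishing on J, and suppose m'(x) ≠ 0 whenever m(x) ∈ [τ₀, τ₁] (for fixed τ₀ ≤ τ₁), and that sign(m'(x)) = sign(n(x)) at every x ∈ J with m(x) ∈ {τ₀, τ₁} and m' nonvanishing there. Then the set K := m⁻¹([τ₀, τ₁]) ∩ J is connected (an interval). -/
open Set

private lemma deriv_nonneg_right {f : ℝ → ℝ} {d u v : ℝ} (huv : u < v)
    (hf : HasDerivAt f d u) (h : ∀ t ∈ Ioo u v, f u < f t) : 0 ≤ d := by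
  have htend : Filter.Tendsto (slope f u) (nhdsWithin u (Ioi u)) (nhds d) :=
    (hasDerivAt_iff_tendsto_slope.mp hf).mono_left
      (nhdsWithin_mono _ fun t ht => ne_of_gt ht)
  refine ge_of_tendsto htend ?_
  filter_upwards [Ioo_mem_nhdsGT huv] with t ht
  rw [slope_def_field]
  have h1 : 0 < f t - f u := sub_pos.mpr (h t ht)
  have h2 : 0 < t - u := sub_pos.mpr ht.1
  positivity

private lemma deriv_nonpos_left {f : ℝ → ℝ} {d u v : ℝ} (huv : u < v)
    (hf : HasDerivAt f d v) (h : ∀ t ∈ Ioo u v, f v < f t) : d ≤ 0 := by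
  have htend : Filter.Tendsto (slope f v) (nhdsWithin v (Iio v)) (nhds d) :=
    (hasDerivAt_iff_tendsto_slope.mp hf).mono_left
      (nhdsWithin_mono _ fun t ht => ne_of_lt ht)
  refine le_of_tendsto htend ?_
  filter_upwards [Ioo_mem_nhdsLT huv] with t ht
  rw [slope_def_field]
  have h1 : 0 < f t - f v := sub_pos.mpr (h t ht)
  have h2 : t - v < 0 := sub_neg.mpr ht.2
  exact le_of_lt (div_neg_of_pos_of_neg h1 h2)

private lemma aux_one_side (a b τ : ℝ) (m n : ℝ → ℝ)
    (hm : AnalyticOnNhd ℝ m (Ioo a b))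
    (hncont : ContinuousOn n (Ioo a b))
    (hnne : ∀ x ∈ Ioo a b, n x ≠ 0)
    (hd : ∀ x ∈ Ioo a b, m x = τ → deriv m x ≠ 0)
    (hs : ∀ x ∈ Ioo a b, m x = τ → (0 < deriv m x ↔ 0 < n x))
    (x y z : ℝ) (hx : x ∈ Ioo a b) (hy : y ∈ Ioo a b)
    (hxz : x ≤ z) (hzy : z ≤ y) (hmx : m x ≤ τ) (hmy : m y ≤ τ) : m z ≤ τ := by
  by_contra hcon
  push_neg at hcon
  have hz : z ∈ Ioo a b := ⟨lt_of_lt_of_le hx.1 hxz, lt_of_le_of_lt hzy hy.2⟩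
  have hmc : ContinuousOn m (Ioo a b) := hm.continuousOn
  -- Left side: u = sSup of points of [x,z] where m = τ
  have hIxz : Icc x z ⊆ Ioo a b := Icc_subset_Ioo hx.1 hz.2
  have hIzy : Icc z y ⊆ Ioo a b := Icc_subset_Ioo hz.1 hy.2
  set A : Set ℝ := Icc x z ∩ m ⁻¹' {τ} with hA
  have hAne : A.Nonempty := by
    obtain ⟨u₀, hu₀, hmu₀⟩ := intermediate_value_Icc hxz (hmc.mono hIxz) ⟨hmx, hcon.le⟩
    exact ⟨u₀, hu₀, hmu₀⟩
  have hAcl : IsClosed A :=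
    (hmc.mono hIxz).preimage_isClosed_of_isClosed isClosed_Icc isClosed_singleton
  have hAcp : IsCompact A := isCompact_Icc.of_isClosed_subset hAcl inter_subset_left
  set u := sSup A with hu
  have huA : u ∈ A := hAcp.sSup_mem hAne
  have hmu : m u = τ := huA.2
  have hux : x ≤ u := huA.1.1
  have huz : u ≤ z := huA.1.2
  have hgt : ∀ t, u < t → t ≤ z → τ < m t := by
    intro t hut htz
    have htI : t ∈ Icc x z := ⟨le_trans hux hut.le, htz⟩
    rcases lt_trichotomy (m t) τ with hlt | heq | hgt
    · obtain ⟨w, hw, hmw⟩ := intermediate_value_Icc htz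
        ((hmc.mono hIxz).mono (Icc_subset_Icc htI.1 le_rfl)) ⟨hlt.le, hcon.le⟩
      have hwA : w ∈ A := ⟨⟨le_trans htI.1 hw.1, hw.2⟩, hmw⟩
      exact absurd (le_csSup hAcp.bddAbove hwA) (not_le.mpr (lt_of_lt_of_le hut hw.1))
    · have : t ∈ A := ⟨htI, heq⟩
      exact absurd (le_csSup hAcp.bddAbove this) (not_le.mpr hut)
    · exact hgt
  -- Right side: v = sInf of points of [z,y] where m = τ
  set B : Set ℝ := Icc z y ∩ m ⁻¹' {τ} with hB
  have hBne : B.Nonempty := by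
    obtain ⟨v₀, hv₀, hmv₀⟩ := intermediate_value_Icc' hzy (hmc.mono hIzy) ⟨hmy, hcon.le⟩
    exact ⟨v₀, hv₀, hmv₀⟩
  have hBcl : IsClosed B :=
    (hmc.mono hIzy).preimage_isClosed_of_isClosed isClosed_Icc isClosed_singleton
  have hBcp : IsCompact B := isCompact_Icc.of_isClosed_subset hBcl inter_subset_left
  set v := sInf B with hv
  have hvB : v ∈ B := hBcp.sInf_mem hBne
  have hmv : m v = τ := hvB.2
  have hzv : z ≤ v := hvB.1.1
  have hlt : ∀ t, z ≤ t → t < v → τ < m t := by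
    intro t hzt htv
    have htI : t ∈ Icc z y := ⟨hzt, le_trans htv.le hvB.1.2⟩
    rcases lt_trichotomy (m t) τ with hlt | heq | hgt
    · obtain ⟨w, hw, hmw⟩ := intermediate_value_Icc' hzt
        ((hmc.mono hIzy).mono (Icc_subset_Icc le_rfl htI.2)) ⟨hlt.le, hcon.le⟩
      have hwB : w ∈ B := ⟨⟨hw.1, le_trans hw.2 htI.2⟩, hmw⟩
      exact absurd (csInf_le hBcp.bddBelow hwB) (not_le.mpr (lt_of_le_of_lt hw.2 htv))
    · have : t ∈ B := ⟨htI, heq⟩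
      exact absurd (csInf_le hBcp.bddBelow this) (not_le.mpr htv)
    · exact hgt
  have huz' : u < z := lt_of_le_of_ne huz (fun h => by rw [h] at hmu; exact absurd hmu (ne_of_lt hcon).symm)
  have hzv' : z < v := lt_of_le_of_ne hzv (fun h => by rw [← h] at hmv; exact absurd hmv (ne_of_lt hcon).symm)
  have huv : u < v := lt_trans huz' hzv'
  have hmid : ∀ t ∈ Ioo u v, τ < m t := by
    intro t ht
    rcases le_or_gt t z with h1 | h1
    · exact hgt t ht.1 h1
    · exact hlt t h1.le ht.2
  have huI : u ∈ Ioo a b := hIxz ⟨hux, huz⟩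
  have hvI : v ∈ Ioo a b := hIzy ⟨hzv, hvB.1.2⟩
  -- derivative at u is positive, so n u > 0
  have hdu : HasDerivAt m (deriv m u) u := (hm u huI).differentiableAt.hasDerivAt
  have hdu0 : 0 ≤ deriv m u := deriv_nonneg_right huv hdu (fun t ht => by
    rw [hmu]; exact hmid t ht)
  have hdune : deriv m u ≠ 0 := hd u huI hmu
  have hnu : 0 < n u := (hs u huI hmu).mp (lt_of_le_of_ne hdu0 (Ne.symm hdune))
  -- derivative at v is negative, so n v < 0
  have hdv : HasDerivAt m (deriv m v) v := (hm v hvI).differentiableAt.hasDerivAt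
  have hdv0 : deriv m v ≤ 0 := deriv_nonpos_left huv hdv (fun t ht => by
    rw [hmv]; exact hmid t ht)
  have hdvne : deriv m v ≠ 0 := hd v hvI hmv
  have hnv : n v < 0 := by
    have : ¬ 0 < deriv m v := not_lt.mpr hdv0
    have hnv0 : ¬ 0 < n v := fun h => this ((hs v hvI hmv).mpr h)
    exact lt_of_le_of_ne (not_lt.mp hnv0) (hnne v hvI)
  -- n changes sign on [u,v] ⊆ (a,b): contradiction
  have hIuv : Icc u v ⊆ Ioo a b := Icc_subset_Ioo huI.1 hvI.2
  obtain ⟨w, hw, hnw⟩ := intermediate_value_Icc' huv.le (hncont.mono hIuv)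
    (⟨hnv.le, hnu.le⟩ : (0:ℝ) ∈ Icc (n v) (n u))
  exact hnne w (hIuv hw) hnw

/-- connectedness of `K = m⁻¹([τ₀,τ₁]) ∩ J` (Lemma 4 of the paper). -/
theorem stmt7 (a b τ₀ τ₁ : ℝ) (hτ : τ₀ ≤ τ₁)
    (m n : ℝ → ℝ)
    (hm : AnalyticOnNhd ℝ m (Ioo a b))
    (hncont : ContinuousOn n (Ioo a b))
    (hnne : ∀ x ∈ Ioo a b, n x ≠ 0)
    (hderiv : ∀ x ∈ Ioo a b, m x ∈ Icc τ₀ τ₁ → deriv m x ≠ 0)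
    (hsign : ∀ x ∈ Ioo a b, (m x = τ₀ ∨ m x = τ₁) → deriv m x ≠ 0 →
      (0 < deriv m x ↔ 0 < n x)) :
    IsPreconnected (m ⁻¹' Icc τ₀ τ₁ ∩ Ioo a b) := by
  refine Set.OrdConnected.isPreconnected ⟨fun x hx y hy z hz => ?_⟩
  have hzJ : z ∈ Ioo a b := ⟨lt_of_lt_of_le hx.2.1 hz.1, lt_of_le_of_lt hz.2 hy.2.2⟩
  refine ⟨⟨?_, ?_⟩, hzJ⟩
  · -- τ₀ ≤ m z, via aux applied to -m, -n, -τ₀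
    have derivneg : ∀ t, deriv (-m) t = - deriv m t := fun t => by
      rw [Pi.neg_def, deriv.fun_neg]
    have := aux_one_side a b (-τ₀) (-m) (-n) hm.neg (hncont.neg)
      (fun t ht h0 => hnne t ht (by simpa using h0))
      (fun t ht hmt => by
        rw [derivneg]
        have : m t = τ₀ := by simpa [neg_eq_iff_eq_neg] using hmt
        simpa using hderiv t ht ⟨this.ge, this.le.trans hτ⟩)
      (fun t ht hmt => by
        have hmt' : m t = τ₀ := by simpa [neg_eq_iff_eq_neg] using hmt
        have hne : deriv m t ≠ 0 := hderiv t ht ⟨hmt'.ge, hmt'.le.trans hτ⟩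
        have hiff := hsign t ht (Or.inl hmt') hne
        rw [derivneg]
        constructor
        · intro hlt
          have : ¬ 0 < deriv m t := fun h => absurd (neg_pos.mp hlt) (asymm h)
          have : ¬ 0 < n t := fun h => this (hiff.mpr h)
          simpa using lt_of_le_of_ne (not_lt.mp this) (hnne t ht)
        · intro hlt
          have h1 : n t < 0 := by simpa using hlt
          have : ¬ 0 < deriv m t := fun h => absurd h (fun _ => absurd (hiff.mp h) (asymm h1))
          exact neg_pos.mpr (lt_of_le_of_ne (not_lt.mp this) hne))
      x y z hx.2 hy.2 hz.1 hz.2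
      (by simpa using hx.1.1) (by simpa using hy.1.1)
    simpa using this
  · exact aux_one_side a b τ₁ m n hm hncont hnne
      (fun t ht hmt => hderiv t ht ⟨hτ.trans hmt.ge, hmt.le⟩)
      (fun t ht hmt => hsign t ht (Or.inr hmt) (hderiv t ht ⟨hτ.trans hmt.ge, hmt.le⟩))
      x y z hx.2 hy.2 hz.1 hz.2 hx.1.2 hy.1.2
end

section
/- Let k_I(λ, ε) := (1/(2πi)) ∫_a^b [n(x+iε)/(λ - m(x+iε)) - n(x-iε)/(λ - m(x-iε))] dx, where m, n are holomorphic near [a,b] ⊂ ℝ, real on [a,b], m' nonvanishing on [a,b], n nonvanishing. Then there exist ε₀ > 0 and a constant C such that |k_I(λ,ε)| ≤ C for all λ in a fixed compact set S ⊂ ℝ and all 0 < ε < ε₀. -/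
open Complex Set Real


lemma stmt13_arctan_integral (a b x₀ ε : ℝ) (hε : 0 < ε) :
    |∫ x in a..b, ε / ((x - x₀) ^ 2 + ε ^ 2)| ≤ π := by
  have hF : ∀ x ∈ Set.uIcc a b, HasDerivAt (fun x => Real.arctan ((x - x₀) / ε))
      (ε / ((x - x₀) ^ 2 + ε ^ 2)) x := by
    intro x _
    have h1 : HasDerivAt (fun x : ℝ => (x - x₀) / ε) (1 / ε) x := by
      simpa using ((hasDerivAt_id x).sub_const x₀).div_const ε
    have h2 := h1.arctan
    convert h2 using 1
    have h3 : (x - x₀) ^ 2 + ε ^ 2 > 0 := by positivity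
    field_simp
    ring
  have hint : IntervalIntegrable (fun x => ε / ((x - x₀) ^ 2 + ε ^ 2)) MeasureTheory.volume a b := by
    apply Continuous.intervalIntegrable
    exact continuous_const.div (by continuity) (fun x => by positivity)
  rw [intervalIntegral.integral_eq_sub_of_hasDerivAt hF hint]
  have b1 := Real.arctan_lt_pi_div_two ((b - x₀) / ε)
  have b2 := Real.neg_pi_div_two_lt_arctan ((b - x₀) / ε)
  have b3 := Real.arctan_lt_pi_div_two ((a - x₀) / ε)
  have b4 := Real.neg_pi_div_two_lt_arctan ((a - x₀) / ε)
  rw [abs_le]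
  constructor <;> linarith

lemma stmt13_exists_x0 {a b k : ℝ} (hab : a ≤ b) (hk : 0 < k) {f : ℝ → ℝ}
    (hf : ContinuousOn f (Icc a b))
    (hmono : ∀ x ∈ Icc a b, ∀ y ∈ Icc a b, x ≤ y → k * (y - x) ≤ f y - f x)
    (lam : ℝ) :
    ∃ x₀ ∈ Icc a b, ∀ x ∈ Icc a b, k * |x - x₀| ≤ |lam - f x| := by
  rcases le_or_gt lam (f a) with h1 | h1
  · refine ⟨a, left_mem_Icc.2 hab, fun x hx => ?_⟩
    have h2 := hmono a (left_mem_Icc.2 hab) x hx hx.1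
    have h3 : |x - a| = x - a := abs_of_nonneg (by linarith [hx.1])
    have h4 : |lam - f x| = f x - lam := by
      rw [abs_sub_comm]; exact abs_of_nonneg (by nlinarith [hx.1])
    rw [h3, h4]; nlinarith [hx.1]
  rcases le_or_gt (f b) lam with h2 | h2
  · refine ⟨b, right_mem_Icc.2 hab, fun x hx => ?_⟩
    have h3 := hmono x hx b (right_mem_Icc.2 hab) hx.2
    have h4 : |x - b| = b - x := by rw [abs_sub_comm]; exact abs_of_nonneg (by linarith [hx.2])
    have h5 : |lam - f x| = lam - f x := abs_of_nonneg (by nlinarith [hx.2])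
    rw [h4, h5]; nlinarith [hx.2]
  · obtain ⟨x₀, hx₀, hfx₀⟩ := intermediate_value_Icc hab hf ⟨h1.le, h2.le⟩
    refine ⟨x₀, hx₀, fun x hx => ?_⟩
    rcases le_total x₀ x with hle | hle
    · have h3 := hmono x₀ hx₀ x hx hle
      have h4 : |x - x₀| = x - x₀ := abs_of_nonneg (by linarith)
      have h5 : f x - lam ≤ |lam - f x| := by rw [abs_sub_comm]; exact le_abs_self _
      rw [h4]; rw [hfx₀] at h3; linarith
    · have h3 := hmono x hx x₀ hx₀ hle
      have h4 : |x - x₀| = x₀ - x := by rw [abs_sub_comm]; exact abs_of_nonneg (by linarith)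
      have h5 : lam - f x ≤ |lam - f x| := le_abs_self _
      rw [h4]; rw [hfx₀] at h3; linarith

lemma stmt13_taylor {m : ℂ → ℂ} {U : Set ℂ} (hU : IsOpen U) (hm : DifferentiableOn ℂ m U)
    {z v : ℂ} {ε c : ℝ} (hε : 0 ≤ ε)
    (hsub : ∀ t ∈ Icc (0:ℝ) ε, z + t * v ∈ U)
    (hbd : ∀ t ∈ Icc (0:ℝ) ε, ‖v * (deriv m (z + t * v) - deriv m z)‖ ≤ c) :
    ‖m (z + ε * v) - m z - ε * v * deriv m z‖ ≤ c * ε := by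
  set g : ℝ → ℂ := fun t => m (z + t * v) - t • (v * deriv m z) with hg
  have hder : ∀ t ∈ Icc (0:ℝ) ε,
      HasDerivWithinAt g (v * deriv m (z + t * v) - v * deriv m z) (Icc 0 ε) t := by
    intro t ht
    have hh : HasDerivAt (fun t : ℝ => z + t * v) v t := by
      have : HasDerivAt (fun t : ℝ => (t : ℂ) * v) v t := by
        simpa using (Complex.ofRealCLM.hasDerivAt (x := t)).mul_const v
      simpa using this.const_add z
    have hmz : HasDerivAt m (deriv m (z + t * v)) (z + t * v) :=
      (hm.differentiableAt (hU.mem_nhds (hsub t ht))).hasDerivAt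
    have hcomp : HasDerivAt (fun t : ℝ => m (z + t * v)) (v • deriv m (z + t * v)) t :=
      HasDerivAt.scomp t hmz hh
    have hlin : HasDerivAt (fun t : ℝ => t • (v * deriv m z)) (v * deriv m z) t := by
      simpa using (hasDerivAt_id t).smul_const (v * deriv m z)
    have := hcomp.sub hlin
    have h2 := this.hasDerivWithinAt (s := Icc 0 ε)
    simp only [smul_eq_mul] at h2
    exact h2
  have hmvt := Convex.norm_image_sub_le_of_norm_hasDerivWithin_le hder
    (fun t ht => by rw [← mul_sub]; exact hbd t ht) (convex_Icc 0 ε) (left_mem_Icc.2 hε) (right_mem_Icc.2 hε)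
  have h0 : g 0 = m z := by simp [hg]
  have hεg : g ε = m (z + ε * v) - ε • (v * deriv m z) := rfl
  rw [h0, hεg] at hmvt
  have : ‖ε - (0:ℝ)‖ = ε := by rw [sub_zero, Real.norm_eq_abs, _root_.abs_of_nonneg hε]
  rw [this] at hmvt
  have heq : m (z + ↑ε * v) - ε • (v * deriv m z) - m z
      = m (z + ↑ε * v) - m z - ↑ε * v * deriv m z := by
    rw [Complex.real_smul]; ring
  rwa [heq] at hmvt

lemma stmt13_sign {k : ℝ} (hk : 0 < k) {f : ℝ → ℝ} {a b : ℝ}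
    (hf : ContinuousOn f (Icc a b)) (h : ∀ x ∈ Icc a b, k ≤ |f x|)
    {x y : ℝ} (hx : x ∈ Icc a b) (hy : y ∈ Icc a b) (hfx : k ≤ f x) : k ≤ f y := by
  rcases le_abs.mp (h y hy) with h' | h'
  · exact h'
  · exfalso
    have hsub : uIcc y x ⊆ Icc a b := by
      intro t ht
      rw [Set.mem_uIcc] at ht
      rcases ht with ht | ht
      · exact ⟨le_trans hy.1 ht.1, le_trans ht.2 hx.2⟩
      · exact ⟨le_trans hx.1 ht.1, le_trans ht.2 hy.2⟩
    have h0 : (0:ℝ) ∈ uIcc (f y) (f x) := by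
      rw [Set.mem_uIcc]; left; constructor <;> linarith
    obtain ⟨c, hc, hfc⟩ := intermediate_value_uIcc (hf.mono hsub) h0
    have := h c (hsub hc)
    rw [hfc] at this
    simp at this; linarith

set_option maxHeartbeats 2000000 in
/-- uniform bound for the approximate Stieltjes-inversion kernel
`k_I(λ,ε)`, for `λ` in a compact set and `0 < ε < ε₀`. -/
theorem stmt13 (a b : ℝ) (hab : a ≤ b) (U : Set ℂ) (hU : IsOpen U)
    (hIU : ∀ x ∈ Icc a b, (x : ℂ) ∈ U)
    (m n : ℂ → ℂ) (hm : DifferentiableOn ℂ m U) (hn : DifferentiableOn ℂ n U)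
    (hmreal : ∀ x ∈ Icc a b, (m (x : ℂ)).im = 0)
    (hnreal : ∀ x ∈ Icc a b, (n (x : ℂ)).im = 0)
    (k : ℝ) (hk : 0 < k) (hkinf : ∀ x ∈ Icc a b, k ≤ ‖deriv m (x : ℂ)‖)
    (hnne : ∀ x ∈ Icc a b, n (x : ℂ) ≠ 0)
    (S : Set ℝ) (hS : IsCompact S) :
    ∃ ε₀ > (0 : ℝ), ∃ C : ℝ,
      ∀ lam ∈ S, ∀ ε : ℝ, 0 < ε → ε < ε₀ →
        ‖(1 / (2 * (π : ℂ) * Complex.I)) * ∫ x in a..b,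
            (n ((x : ℂ) + ε * Complex.I) / ((lam : ℂ) - m ((x : ℂ) + ε * Complex.I))
              - n ((x : ℂ) - ε * Complex.I) / ((lam : ℂ) - m ((x : ℂ) - ε * Complex.I)))‖
          ≤ C := by
  rcases eq_or_lt_of_le hab with rfl | hab'
  · refine ⟨1, one_pos, 0, fun lam _ ε _ _ => ?_⟩
    rw [intervalIntegral.integral_same, mul_zero, norm_zero]
  -- compact box K around [a,b]
  have hTc : IsCompact (Complex.ofReal '' Icc a b) :=
    isCompact_Icc.image Complex.continuous_ofReal
  have hTU : Complex.ofReal '' Icc a b ⊆ U := by rintro z ⟨x, hx, rfl⟩; exact hIU x hx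
  obtain ⟨δ₁, hδ₁, hthick⟩ := hTc.exists_thickening_subset_open hU hTU
  set δ := δ₁ / 2 with hδdef
  have hδ : 0 < δ := by positivity
  set K : Set ℂ := Complex.re ⁻¹' Icc a b ∩ Complex.im ⁻¹' Icc (-δ) δ with hKdef
  have hKmem : ∀ z : ℂ, z ∈ K ↔ (z.re ∈ Icc a b ∧ z.im ∈ Icc (-δ) δ) := fun z => Iff.rfl
  have hKU : K ⊆ U := by
    intro z hz
    apply hthick
    rw [Metric.mem_thickening_iff]
    refine ⟨(z.re : ℂ), ⟨z.re, hz.1, rfl⟩, ?_⟩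
    have h1 : z - (z.re : ℂ) = (z.im : ℂ) * Complex.I := by
      apply Complex.ext <;> simp
    have h2 : dist z (z.re : ℂ) = |z.im| := by
      rw [Complex.dist_eq, h1]
      simp
    rw [h2]
    have h3 : |z.im| ≤ δ := abs_le.mpr hz.2
    rw [hδdef] at h3
    linarith
  have hKc : IsCompact K := by
    rw [Metric.isCompact_iff_isClosed_bounded]
    constructor
    · exact (isClosed_Icc.preimage Complex.continuous_re).inter
        (isClosed_Icc.preimage Complex.continuous_im)
    · apply Bornology.IsBounded.subset (Metric.isBounded_closedBall
        (x := (0:ℂ)) (r := |a| + |b| + δ))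
      intro z hz
      rw [Metric.mem_closedBall, dist_zero_right]
      have h1 := Complex.norm_le_abs_re_add_abs_im z
      have h2 : |z.re| ≤ |a| + |b| := by
        rcases hz.1 with ⟨h3, h4⟩
        rw [abs_le]
        constructor
        · have := neg_abs_le a; linarith [abs_nonneg b]
        · have := le_abs_self b; linarith [abs_nonneg a]
      have h3 : |z.im| ≤ δ := abs_le.mpr hz.2
      linarith
  have hKconv : Convex ℝ K := by
    apply Convex.inter
    · exact (convex_Icc a b).linear_preimage Complex.reLm
    · exact (convex_Icc (-δ) δ).linear_preimage Complex.imLm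
  have hmemK : ∀ x ∈ Icc a b, ∀ t : ℝ, |t| ≤ δ → (x : ℂ) + t * Complex.I ∈ K := by
    intro x hx t ht
    rw [hKmem]
    constructor
    · simpa using hx
    · simp only [Complex.add_im, Complex.ofReal_im, Complex.mul_im, Complex.ofReal_re,
        Complex.I_im, Complex.I_re]
      rw [abs_le] at ht
      constructor <;> simp <;> linarith [ht.1, ht.2]
  have hxK : ∀ x ∈ Icc a b, (x : ℂ) ∈ K := by
    intro x hx
    have := hmemK x hx 0 (by simp [hδ.le])
    simpa using this
  -- analyticity and continuity
  have hmA : AnalyticOnNhd ℂ m U := hm.analyticOnNhd hU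
  have hnA : AnalyticOnNhd ℂ n U := hn.analyticOnNhd hU
  have hm'c : ContinuousOn (deriv m) U := hmA.deriv.continuousOn
  have hn'c : ContinuousOn (deriv n) U := hnA.deriv.continuousOn
  -- bounds on K
  obtain ⟨Mm, hMm⟩ := hKc.exists_bound_of_continuousOn (hm.continuousOn.mono hKU)
  obtain ⟨Mn, hMn⟩ := hKc.exists_bound_of_continuousOn (hn.continuousOn.mono hKU)
  obtain ⟨Lm, hLm⟩ := hKc.exists_bound_of_continuousOn (hm'c.mono hKU)
  obtain ⟨Ln, hLn⟩ := hKc.exists_bound_of_continuousOn (hn'c.mono hKU)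
  obtain ⟨Λ₀, hΛ₀⟩ := hS.exists_bound_of_continuousOn continuousOn_id
  set Λ : ℝ := |Λ₀| with hΛdef
  have hΛ : ∀ l ∈ S, |l| ≤ Λ := fun l hl => le_trans (hΛ₀ l hl) (le_abs_self _)
  have haK : (a : ℂ) ∈ K := hxK a (left_mem_Icc.2 hab)
  have hMm0 : 0 ≤ Mm := le_trans (norm_nonneg _) (hMm _ haK)
  have hMn0 : 0 ≤ Mn := le_trans (norm_nonneg _) (hMn _ haK)
  have hLm0 : 0 ≤ Lm := le_trans (norm_nonneg _) (hLm _ haK)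
  have hLn0 : 0 ≤ Ln := le_trans (norm_nonneg _) (hLn _ haK)
  have hΛ0 : 0 ≤ Λ := abs_nonneg _
  -- uniform continuity of deriv m on K
  have hUC := hKc.uniformContinuousOn_of_continuous (hm'c.mono hKU)
  rw [Metric.uniformContinuousOn_iff] at hUC
  obtain ⟨δ₂, hδ₂pos, hδ₂⟩ := hUC (k / 2) (by positivity)
  -- reality of deriv m on [a,b]
  have hm'real : ∀ x ∈ Icc a b, (deriv m (x : ℂ)).im = 0 := by
    intro x hx
    have hmx : HasDerivAt m (deriv m (x : ℂ)) (x : ℂ) :=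
      (hm.differentiableAt (hU.mem_nhds (hIU x hx))).hasDerivAt
    have h1 : HasDerivAt (fun z => -Complex.I * m z) (-Complex.I * deriv m (x : ℂ)) ((x : ℝ) : ℂ) :=
      hmx.const_mul (-Complex.I)
    have h2 := h1.real_of_complex
    have e1 : (fun t : ℝ => ((-Complex.I) * m (t : ℂ)).re) = fun t : ℝ => (m (t : ℂ)).im := by
      funext t; simp
    have e2 : ((-Complex.I) * deriv m ((x : ℝ) : ℂ)).re = (deriv m ((x : ℝ) : ℂ)).im := by simp
    rw [e1, e2] at h2
    have h0 : HasDerivWithinAt (fun t : ℝ => (m (t : ℂ)).im) 0 (Icc a b) x :=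
      (hasDerivWithinAt_const x (Icc a b) 0).congr (fun y hy => hmreal y hy) (hmreal x hx)
    exact (uniqueDiffOn_Icc hab' x hx).eq_deriv _ h2.hasDerivWithinAt h0
  -- the real restriction and its derivative
  set mr : ℝ → ℝ := fun t => (m (t : ℂ)).re with hmrdef
  set d : ℝ → ℝ := fun t => (deriv m (t : ℂ)).re with hddef
  have hmrd : ∀ x ∈ Icc a b, HasDerivAt mr (d x) x := fun x hx =>
    ((hm.differentiableAt (hU.mem_nhds (hIU x hx))).hasDerivAt).real_of_complex
  have hmrc : ContinuousOn mr (Icc a b) := fun x hx =>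
    (hmrd x hx).continuousAt.continuousWithinAt
  have hdk : ∀ x ∈ Icc a b, k ≤ |d x| := by
    intro x hx
    have h1 : deriv m (x : ℂ) = ((d x : ℝ) : ℂ) := by
      apply Complex.ext
      · simp [hddef]
      · simpa using hm'real x hx
    have h2 := hkinf x hx
    rw [h1] at h2
    simpa using h2
  have hdc : ContinuousOn d (Icc a b) := by
    have h1 : ContinuousOn (fun t : ℝ => deriv m (t : ℂ)) (Icc a b) :=
      (hm'c.mono hKU).comp Complex.continuous_ofReal.continuousOn (fun x hx => hxK x hx)
    exact Complex.continuous_re.comp_continuousOn h1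
  -- existence of the center x₀ for each lam
  have hx0 : ∀ lam : ℝ, ∃ x₀ ∈ Icc a b, ∀ x ∈ Icc a b, k * |x - x₀| ≤ |lam - mr x| := by
    have hda := hdk a (left_mem_Icc.2 hab)
    rcases le_abs.mp hda with hsgn | hsgn
    · have hdall : ∀ x ∈ Icc a b, k ≤ d x := fun x hx =>
        stmt13_sign hk hdc hdk (left_mem_Icc.2 hab) hx hsgn
      have hmono : ∀ x ∈ Icc a b, ∀ y ∈ Icc a b, x ≤ y → k * (y - x) ≤ mr y - mr x := by
        intro x hx y hy hxy
        exact Convex.mul_sub_le_image_sub_of_le_deriv (convex_Icc a b) hmrc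
          (fun z hz => ((hmrd z (interior_subset hz)).differentiableAt).differentiableWithinAt)
          (fun z hz => by
            rw [(hmrd z (interior_subset hz)).deriv]; exact hdall z (interior_subset hz))
          x hx y hy hxy
      exact fun lam => stmt13_exists_x0 hab hk hmrc hmono lam
    · have hdall : ∀ x ∈ Icc a b, k ≤ -d x := fun x hx =>
        stmt13_sign hk hdc.neg (fun y hy => by rw [Pi.neg_apply, abs_neg]; exact hdk y hy)
          (left_mem_Icc.2 hab) hx hsgn
      have hmono : ∀ x ∈ Icc a b, ∀ y ∈ Icc a b, x ≤ y →
          k * (y - x) ≤ (fun t => -mr t) y - (fun t => -mr t) x := by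
        intro x hx y hy hxy
        exact Convex.mul_sub_le_image_sub_of_le_deriv (convex_Icc a b) hmrc.neg
          (fun z hz => (((hmrd z (interior_subset hz)).neg).differentiableAt).differentiableWithinAt)
          (fun z hz => by
            rw [((hmrd z (interior_subset hz)).neg).deriv]; exact hdall z (interior_subset hz))
          x hx y hy hxy
      intro lam
      obtain ⟨x₀, hx₀, h⟩ := stmt13_exists_x0 hab hk hmrc.neg hmono (-lam)
      refine ⟨x₀, hx₀, fun x hx => ?_⟩
      have h1 := h x hx
      have h2 : -lam - (fun t => -mr t) x = -(lam - mr x) := by simp; ring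
      rw [Pi.neg_apply, show -lam - -mr x = -(lam - mr x) by ring, abs_neg] at h1
      exact h1
  -- constants
  set C₂ : ℝ := (Λ + Mm) * Ln + Mn * Lm with hC₂def
  have hC₂0 : 0 ≤ C₂ := by
    apply add_nonneg
    · exact mul_nonneg (add_nonneg hΛ0 hMm0) hLn0
    · exact mul_nonneg hMn0 hLm0
  have h32 : 0 ≤ 32 * C₂ / k ^ 2 := by positivity
  refine ⟨min δ δ₂, lt_min hδ hδ₂pos, 1 / (2 * π) * (32 * C₂ / k ^ 2 * π), ?_⟩
  intro lam hlam ε hε hεlt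
  have hεδ : ε ≤ δ := le_of_lt (lt_of_lt_of_le hεlt (min_le_left _ _))
  have hεδ₂ : ε < δ₂ := lt_of_lt_of_le hεlt (min_le_right _ _)
  obtain ⟨x₀, hx₀, hx₀p⟩ := hx0 lam
  set g : ℝ → ℝ := fun x => 32 * C₂ / k ^ 2 * (ε / ((x - x₀) ^ 2 + ε ^ 2)) with hgdef
  -- pointwise bound
  have hpt : ∀ x ∈ Icc a b,
      ‖n ((x : ℂ) + ε * Complex.I) / ((lam : ℂ) - m ((x : ℂ) + ε * Complex.I))
        - n ((x : ℂ) - ε * Complex.I) / ((lam : ℂ) - m ((x : ℂ) - ε * Complex.I))‖ ≤ g x := by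
    intro x hx
    set wp : ℂ := (x : ℂ) + ε * Complex.I with hwpdef
    set wm : ℂ := (x : ℂ) - ε * Complex.I with hwmdef
    have hwpK : wp ∈ K := hmemK x hx ε (by rw [_root_.abs_of_nonneg hε.le]; exact hεδ)
    have hwmK : wm ∈ K := by
      have h1 : wm = (x : ℂ) + (-ε : ℝ) * Complex.I := by rw [hwmdef]; push_cast; ring
      rw [h1]
      exact hmemK x hx (-ε) (by rw [abs_neg, _root_.abs_of_nonneg hε.le]; exact hεδ)
    -- Taylor estimates
    have hδ₂' : ∀ t ∈ Icc (0:ℝ) ε, ∀ s : ℝ, |s| = t →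
        ‖deriv m ((x : ℂ) + s * Complex.I) - deriv m (x : ℂ)‖ ≤ k / 2 := by
      intro t ht s hs
      have hsK : (x : ℂ) + s * Complex.I ∈ K :=
        hmemK x hx s (by rw [hs]; exact le_trans ht.2 hεδ)
      have hdist : dist ((x : ℂ) + s * Complex.I) ((x : ℂ)) < δ₂ := by
        rw [dist_eq_norm]
        have h1 : (x : ℂ) + s * Complex.I - (x : ℂ) = (s : ℂ) * Complex.I := by ring
        rw [h1]
        simp only [norm_mul, Complex.norm_I, mul_one, Complex.norm_real, Real.norm_eq_abs]
        rw [hs]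
        exact lt_of_le_of_lt ht.2 hεδ₂
      have := hδ₂ _ hsK _ (hxK x hx) hdist
      rw [dist_eq_norm] at this
      exact this.le
    have hTp : ‖m wp - m (x : ℂ) - (ε : ℂ) * Complex.I * deriv m (x : ℂ)‖ ≤ k / 2 * ε := by
      apply stmt13_taylor hU hm hε.le
      · intro t ht
        exact hKU (hmemK x hx t (by
          rw [_root_.abs_of_nonneg ht.1]; exact le_trans ht.2 hεδ))
      · intro t ht
        rw [norm_mul, Complex.norm_I, one_mul]
        exact hδ₂' t ht t (_root_.abs_of_nonneg ht.1)
    have hTm : ‖m wm - m (x : ℂ) + (ε : ℂ) * Complex.I * deriv m (x : ℂ)‖ ≤ k / 2 * ε := by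
      have h1 : ∀ t : ℝ, (x : ℂ) + (t : ℂ) * (-Complex.I) = (x : ℂ) + (-t : ℝ) * Complex.I := by
        intro t; push_cast; ring
      have h2 := stmt13_taylor hU hm hε.le (z := (x : ℂ)) (v := -Complex.I) (c := k / 2)
        (fun t ht => by
          rw [h1 t]
          exact hKU (hmemK x hx (-t) (by
            rw [abs_neg, _root_.abs_of_nonneg ht.1]; exact le_trans ht.2 hεδ)))
        (fun t ht => by
          rw [h1 t, norm_mul]
          simp only [norm_neg, Complex.norm_I, one_mul]
          exact hδ₂' t ht (-t) (by rw [abs_neg, _root_.abs_of_nonneg ht.1]))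
      have h3 : (x : ℂ) + (ε : ℂ) * (-Complex.I) = wm := by rw [hwmdef]; ring
      rw [h3] at h2
      have h4 : m wm - m (x : ℂ) - (ε : ℂ) * (-Complex.I) * deriv m (x : ℂ)
          = m wm - m (x : ℂ) + (ε : ℂ) * Complex.I * deriv m (x : ℂ) := by ring
      rwa [h4] at h2
    set A : ℝ := |lam - mr x| with hAdef
    have hmx : m (x : ℂ) = ((mr x : ℝ) : ℂ) := by
      apply Complex.ext
      · simp [hmrdef]
      · simpa using hmreal x hx
    have hdx : deriv m (x : ℂ) = ((d x : ℝ) : ℂ) := by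
      apply Complex.ext
      · simp [hddef]
      · simpa using hm'real x hx
    -- norm of the model point
    have hz1norm : ∀ σ : ℝ, |σ| = 1 →
        max A (k * ε) ≤ ‖(((lam - mr x : ℝ)) : ℂ) - (σ : ℂ) * (ε : ℂ) * Complex.I * ((d x : ℝ) : ℂ)‖ := by
      intro σ hσ
      set z1 : ℂ := (((lam - mr x : ℝ)) : ℂ) - (σ : ℂ) * (ε : ℂ) * Complex.I * ((d x : ℝ) : ℂ) with hz1def
      have hre : z1.re = lam - mr x := by simp [hz1def]
      have him : z1.im = -(σ * (ε * d x)) := by simp [hz1def]; ring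
      have h1 : |z1.re| ≤ ‖z1‖ := Complex.abs_re_le_norm z1
      have h2 : |z1.im| ≤ ‖z1‖ := Complex.abs_im_le_norm z1
      rw [hre] at h1
      rw [him, abs_neg, _root_.abs_mul, hσ, one_mul, _root_.abs_mul, _root_.abs_of_nonneg hε.le] at h2
      have h3 : k * ε ≤ ε * |d x| := by
        have := hdk x hx
        nlinarith
      exact max_le h1 (le_trans h3 h2)
    -- denominator bounds
    have hden : ∀ w : ℂ, ∀ σ : ℝ, |σ| = 1 →
        ‖m w - m (x : ℂ) - (σ : ℂ) * (ε : ℂ) * Complex.I * deriv m (x : ℂ)‖ ≤ k / 2 * ε →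
        (A + k * ε) / 4 ≤ ‖(lam : ℂ) - m w‖ := by
      intro w σ hσ hT
      have heq : (lam : ℂ) - m w
          = ((((lam - mr x : ℝ)) : ℂ) - (σ : ℂ) * (ε : ℂ) * Complex.I * ((d x : ℝ) : ℂ))
            - (m w - m (x : ℂ) - (σ : ℂ) * (ε : ℂ) * Complex.I * deriv m (x : ℂ)) := by
        rw [hmx, hdx]
        push_cast
        ring
      rw [heq]
      have h1 := hz1norm σ hσ
      have h2 := norm_sub_norm_le
        ((((lam - mr x : ℝ)) : ℂ) - (σ : ℂ) * (ε : ℂ) * Complex.I * ((d x : ℝ) : ℂ))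
        (m w - m (x : ℂ) - (σ : ℂ) * (ε : ℂ) * Complex.I * deriv m (x : ℂ))
      have h3 : A ≤ max A (k * ε) := le_max_left _ _
      have h4 : k * ε ≤ max A (k * ε) := le_max_right _ _
      linarith
    have hDp : (A + k * ε) / 4 ≤ ‖(lam : ℂ) - m wp‖ := by
      apply hden wp 1 (by simp)
      have h1 : ((1 : ℝ) : ℂ) * (ε : ℂ) * Complex.I * deriv m (x : ℂ)
          = (ε : ℂ) * Complex.I * deriv m (x : ℂ) := by push_cast; ring
      rw [h1]
      exact hTp
    have hDm : (A + k * ε) / 4 ≤ ‖(lam : ℂ) - m wm‖ := by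
      apply hden wm (-1) (by simp)
      have h1 : m wm - m (x : ℂ) - ((-1 : ℝ) : ℂ) * (ε : ℂ) * Complex.I * deriv m (x : ℂ)
          = m wm - m (x : ℂ) + (ε : ℂ) * Complex.I * deriv m (x : ℂ) := by push_cast; ring
      rw [h1]
      exact hTm
    have hA0 : 0 ≤ A := abs_nonneg _
    have hkε : 0 < k * ε := mul_pos hk hε
    have hDppos : 0 < ‖(lam : ℂ) - m wp‖ := lt_of_lt_of_le (show (0:ℝ) < (A + k * ε) / 4 by linarith) hDp
    have hDmpos : 0 < ‖(lam : ℂ) - m wm‖ := lt_of_lt_of_le (show (0:ℝ) < (A + k * ε) / 4 by linarith) hDm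
    have hDpne : (lam : ℂ) - m wp ≠ 0 := norm_pos_iff.mp hDppos
    have hDmne : (lam : ℂ) - m wm ≠ 0 := norm_pos_iff.mp hDmpos
    -- Lipschitz bounds across the cut
    have hww : ‖wp - wm‖ = 2 * ε := by
      have h1 : wp - wm = ((2 * ε : ℝ) : ℂ) * Complex.I := by
        rw [hwpdef, hwmdef]; push_cast; ring
      rw [h1, norm_mul, Complex.norm_I, mul_one, Complex.norm_real, Real.norm_eq_abs,
        _root_.abs_of_nonneg (by positivity : (0:ℝ) ≤ 2 * ε)]
    have hnd : ‖n wp - n wm‖ ≤ Ln * (2 * ε) := by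
      have h1 := Convex.norm_image_sub_le_of_norm_deriv_le
        (fun z hz => hn.differentiableAt (hU.mem_nhds (hKU hz)))
        (fun z hz => hLn z hz) hKconv hwmK hwpK
      rwa [hww] at h1
    have hmd : ‖m wp - m wm‖ ≤ Lm * (2 * ε) := by
      have h1 := Convex.norm_image_sub_le_of_norm_deriv_le
        (fun z hz => hm.differentiableAt (hU.mem_nhds (hKU hz)))
        (fun z hz => hLm z hz) hKconv hwmK hwpK
      rwa [hww] at h1
    -- numerator bound
    have hN : ‖n wp * ((lam : ℂ) - m wm) - ((lam : ℂ) - m wp) * n wm‖ ≤ 2 * ε * C₂ := by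
      have hNid : n wp * ((lam : ℂ) - m wm) - ((lam : ℂ) - m wp) * n wm
          = (lam : ℂ) * (n wp - n wm) + m wp * (n wm - n wp) + (m wp - m wm) * n wp := by
        ring
      rw [hNid]
      have h1 : ‖(lam : ℂ) * (n wp - n wm)‖ ≤ Λ * (Ln * (2 * ε)) := by
        rw [norm_mul, Complex.norm_real, Real.norm_eq_abs]
        exact mul_le_mul (hΛ lam hlam) hnd (norm_nonneg _) hΛ0
      have h2 : ‖m wp * (n wm - n wp)‖ ≤ Mm * (Ln * (2 * ε)) := by
        rw [norm_mul]
        have := norm_sub_rev (n wp) (n wm)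
        exact mul_le_mul (hMm _ hwpK) (by rw [← this]; exact hnd) (norm_nonneg _) hMm0
      have h3 : ‖(m wp - m wm) * n wp‖ ≤ Lm * (2 * ε) * Mn := by
        rw [norm_mul]
        exact mul_le_mul hmd (hMn _ hwpK) (norm_nonneg _) (by positivity)
      calc ‖(lam : ℂ) * (n wp - n wm) + m wp * (n wm - n wp) + (m wp - m wm) * n wp‖
          ≤ ‖(lam : ℂ) * (n wp - n wm) + m wp * (n wm - n wp)‖ + ‖(m wp - m wm) * n wp‖ :=
            norm_add_le _ _
        _ ≤ ‖(lam : ℂ) * (n wp - n wm)‖ + ‖m wp * (n wm - n wp)‖ + ‖(m wp - m wm) * n wp‖ := by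
            linarith [norm_add_le ((lam : ℂ) * (n wp - n wm)) (m wp * (n wm - n wp))]
        _ ≤ Λ * (Ln * (2 * ε)) + Mm * (Ln * (2 * ε)) + Lm * (2 * ε) * Mn := by linarith
        _ = 2 * ε * C₂ := by rw [hC₂def]; ring
    -- denominator product bound
    have hdenprod : k ^ 2 / 16 * ((x - x₀) ^ 2 + ε ^ 2)
        ≤ ‖(lam : ℂ) - m wp‖ * ‖(lam : ℂ) - m wm‖ := by
      have h1 : k * |x - x₀| ≤ A := hx₀p x hx
      have h2 : ((A + k * ε) / 4) * ((A + k * ε) / 4)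
          ≤ ‖(lam : ℂ) - m wp‖ * ‖(lam : ℂ) - m wm‖ :=
        mul_le_mul hDp hDm (by linarith) (norm_nonneg _)
      have h3 : (k * |x - x₀|) * (k * |x - x₀|) ≤ A * A :=
        mul_le_mul h1 h1 (by positivity) hA0
      have h4 : |x - x₀| * |x - x₀| = (x - x₀) ^ 2 := by
        rw [← _root_.abs_mul, _root_.abs_of_nonneg (mul_self_nonneg (x - x₀)), ← sq]
      nlinarith [hA0, hkε.le, hε.le, hk.le]
    -- combine
    rw [div_sub_div _ _ hDpne hDmne, norm_div, norm_mul]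
    have hu : (0:ℝ) < (x - x₀) ^ 2 + ε ^ 2 := by positivity
    have h5 : ‖n wp * ((lam : ℂ) - m wm) - ((lam : ℂ) - m wp) * n wm‖
          / (‖(lam : ℂ) - m wp‖ * ‖(lam : ℂ) - m wm‖)
        ≤ (2 * ε * C₂) / (k ^ 2 / 16 * ((x - x₀) ^ 2 + ε ^ 2)) :=
      div_le_div₀ (by positivity) hN (by positivity) hdenprod
    refine le_trans h5 (le_of_eq ?_)
    rw [hgdef]
    field_simp
    ring
  -- integrate
  have hgint : IntervalIntegrable g MeasureTheory.volume a b := by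
    apply Continuous.intervalIntegrable
    apply continuous_const.mul
    exact continuous_const.div (by continuity) (fun x => by positivity)
  have hae : ∀ᵐ t : ℝ ∂(MeasureTheory.volume.restrict (Set.uIoc a b)),
      ‖n ((t : ℂ) + ε * Complex.I) / ((lam : ℂ) - m ((t : ℂ) + ε * Complex.I))
        - n ((t : ℂ) - ε * Complex.I) / ((lam : ℂ) - m ((t : ℂ) - ε * Complex.I))‖ ≤ g t := by
    rw [MeasureTheory.ae_restrict_iff' measurableSet_uIoc]
    apply Filter.Eventually.of_forall
    intro t ht
    apply hpt
    rw [Set.uIoc_of_le hab] at ht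
    exact Ioc_subset_Icc_self ht
  have hbound := intervalIntegral.norm_integral_le_abs_of_norm_le hae hgint
  have hgeq : (∫ x in a..b, g x) = 32 * C₂ / k ^ 2 * ∫ x in a..b, ε / ((x - x₀) ^ 2 + ε ^ 2) := by
    rw [hgdef]
    exact intervalIntegral.integral_const_mul _ _
  rw [norm_mul]
  have hpref : ‖(1 / (2 * (π : ℂ) * Complex.I))‖ = 1 / (2 * π) := by
    rw [norm_div, norm_one, norm_mul, norm_mul, Complex.norm_I, Complex.norm_real,
      Real.norm_eq_abs, abs_of_pos Real.pi_pos]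
    norm_num
  rw [hpref]
  calc 1 / (2 * π) * ‖∫ x in a..b,
        (n ((x : ℂ) + ε * Complex.I) / ((lam : ℂ) - m ((x : ℂ) + ε * Complex.I))
          - n ((x : ℂ) - ε * Complex.I) / ((lam : ℂ) - m ((x : ℂ) - ε * Complex.I)))‖
      ≤ 1 / (2 * π) * |∫ x in a..b, g x| := by
        apply mul_le_mul_of_nonneg_left hbound
        positivity
    _ = 1 / (2 * π) * (32 * C₂ / k ^ 2 * |∫ x in a..b, ε / ((x - x₀) ^ 2 + ε ^ 2)|) := by
        rw [hgeq, _root_.abs_mul, _root_.abs_of_nonneg h32]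
    _ ≤ 1 / (2 * π) * (32 * C₂ / k ^ 2 * π) := by
        apply mul_le_mul_of_nonneg_left _ (by positivity)
        exact mul_le_mul_of_nonneg_left (stmt13_arctan_integral a b x₀ ε hε) h32
end

section
/- Let D be the operator on G = ⊕_{v∈V} ℂ^{deg v} defined by (Dξ)_{v,e} = ξ_{v_e, e}, where v_e denotes the other endpoint of the edge e, and let P = ⊕_v P_v where P_v is the orthogonal projection onto the span of the all-ones vector p_v ∈ ℂ^{deg v}. Then the map Θ : ℓ²(G) → ran P, (Θξ)_v = ξ(v) p_v, is unitary and intertwines D_P := P D P* with the weighted adjacency operator Δ: D_P Θ = Θ Δ. -/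
open Set

/-- The endpoint of an edge-side pair: `(e, false)` is the initial vertex `ιe`,
`(e, true)` is the terminal vertex `τe`. -/
def endv {V E : Type*} (ι τ : E → V) (p : E × Bool) : V :=
  if p.2 then τ p.1 else ι p.1

/-- The degree of a vertex: the number of incident edge-sides. -/
noncomputable def vdeg {V E : Type*} (ι τ : E → V) (v : V) : ℕ :=
  Nat.card {p : E × Bool // endv ι τ p = v}

/-- `Θ : ℓ²(G) → 𝒢`, `(Θξ)_{v,e} = ξ(v)`. -/
def Theta {V E : Type*} (ι τ : E → V) (ξ : V → ℂ) (p : E × Bool) : ℂ :=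
  ξ (endv ι τ p)

/-- `(Dξ)_{v,e} = ξ_{v_e,e}`: swap of the two endpoints of each edge. -/
def Dop {V E : Type*} (_ι _τ : E → V) (ξ : E × Bool → ℂ) (p : E × Bool) : ℂ :=
  ξ (p.1, !p.2)

/-- `P = ⊕_v P_v`, the orthogonal projection onto the all-ones vectors. -/
noncomputable def Pop {V E : Type*} (ι τ : E → V) (ξ : E × Bool → ℂ)
    (p : E × Bool) : ℂ :=
  ((vdeg ι τ (endv ι τ p) : ℂ))⁻¹ *
    ∑ᶠ q ∈ {q : E × Bool | endv ι τ q = endv ι τ p}, ξ q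

/-- The weighted adjacency operator `(Δξ)(v) = (1/deg v) Σ_{e ∈ E_v} ξ(v_e)`. -/
noncomputable def adjOp' {V E : Type*} (ι τ : E → V) (ξ : V → ℂ) (v : V) : ℂ :=
  ((vdeg ι τ v : ℂ))⁻¹ *
    ∑ᶠ p ∈ {p : E × Bool | endv ι τ p = v}, ξ (endv ι τ (p.1, !p.2))

/-- `Θ` is a unitary of `ℓ²(G)` onto `ran P` and intertwines
`D_P = P D P*` with the weighted adjacency operator `Δ`: `D_P Θ = Θ Δ`. -/
theorem stmt17 {V E : Type*} (ι τ : E → V)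
    (hfin : ∀ v : V, {p : E × Bool | endv ι τ p = v}.Finite)
    (hdeg : ∀ v : V, 1 ≤ vdeg ι τ v) :
    (∀ ξ : V → ℂ, Summable (fun v => (vdeg ι τ v : ℝ) * ‖ξ v‖ ^ 2) →
      (∑' p : E × Bool, ‖Theta ι τ ξ p‖ ^ 2)
        = ∑' v : V, (vdeg ι τ v : ℝ) * ‖ξ v‖ ^ 2) ∧
    (∀ ξ : V → ℂ, Pop ι τ (Theta ι τ ξ) = Theta ι τ ξ) ∧
    (∀ η : E × Bool → ℂ, Pop ι τ η = η → ∃ ξ : V → ℂ, Theta ι τ ξ = η) ∧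
    (∀ ξ : V → ℂ, Pop ι τ (Dop ι τ (Theta ι τ ξ)) = Theta ι τ (adjOp' ι τ ξ)) := by

  classical
  haveI : ∀ v, Finite {p : E × Bool // endv ι τ p = v} := fun v => (hfin v).to_subtype
  have hcard : ∀ v : V, Nat.card {p : E × Bool | endv ι τ p = v} = vdeg ι τ v := fun v => rfl
  have hcardF : ∀ v : V, (hfin v).toFinset.card = vdeg ι τ v := by
    intro v
    rw [← hcard v, Nat.card_coe_set_eq, Set.ncard_eq_toFinset_card _ (hfin v)]
  have hne : ∀ v : V, (vdeg ι τ v : ℂ) ≠ 0 := by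
    intro v
    exact_mod_cast Nat.cast_ne_zero.mpr (Nat.one_le_iff_ne_zero.mp (hdeg v))
  refine ⟨?_, ?_, ?_, ?_⟩
  · intro ξ hs
    have key : ∀ v : V, (∑' _ : {p : E × Bool // endv ι τ p = v}, ‖ξ v‖ ^ 2)
        = (vdeg ι τ v : ℝ) * ‖ξ v‖ ^ 2 := by
      intro v
      rw [tsum_const, nsmul_eq_mul]
      rfl
    have hfe : ∀ x : Σ v : V, {p : E × Bool // endv ι τ p = v},
        ‖Theta ι τ ξ ((Equiv.sigmaFiberEquiv (endv ι τ)) x)‖ ^ 2 = ‖ξ x.1‖ ^ 2 := by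
      rintro ⟨v, q, hq⟩
      simp [Theta, Equiv.sigmaFiberEquiv, hq]
    rw [← (Equiv.sigmaFiberEquiv (endv ι τ)).tsum_eq
      (fun p : E × Bool => ‖Theta ι τ ξ p‖ ^ 2)]
    have h1 : (fun x : Σ v : V, {p : E × Bool // endv ι τ p = v} =>
        ‖Theta ι τ ξ ((Equiv.sigmaFiberEquiv (endv ι τ)) x)‖ ^ 2)
        = fun x => ‖ξ x.1‖ ^ 2 := funext hfe
    rw [show (∑' x : Σ v : V, {p : E × Bool // endv ι τ p = v},
        ‖Theta ι τ ξ ((Equiv.sigmaFiberEquiv (endv ι τ)) x)‖ ^ 2)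
        = ∑' x : Σ v : V, {p : E × Bool // endv ι τ p = v}, ‖ξ x.1‖ ^ 2 from by rw [h1]]
    have hsum : Summable (fun x : Σ v : V, {p : E × Bool // endv ι τ p = v} => ‖ξ x.1‖ ^ 2) := by
      rw [summable_sigma_of_nonneg (fun x => by positivity)]
      constructor
      · intro v
        exact Summable.of_finite
      · refine hs.congr fun v => ?_
        rw [key v]
    rw [Summable.tsum_sigma hsum]
    exact tsum_congr key
  · intro ξ
    funext p
    set v := endv ι τ p with hv
    show ((vdeg ι τ v : ℂ))⁻¹ * ∑ᶠ q ∈ {q : E × Bool | endv ι τ q = v}, Theta ι τ ξ q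
        = ξ v
    have h1 : ∑ᶠ q ∈ {q : E × Bool | endv ι τ q = v}, Theta ι τ ξ q
        = ∑ᶠ q ∈ {q : E × Bool | endv ι τ q = v}, ξ v :=
      finsum_mem_congr rfl (fun q hq => by simp [Theta, hq.out])
    rw [h1, ← (hfin v).coe_toFinset, finsum_mem_coe_finset, Finset.sum_const,
      nsmul_eq_mul, hcardF v, ← mul_assoc, inv_mul_cancel₀ (hne v), one_mul]
  · intro η hη
    exact ⟨fun v => ((vdeg ι τ v : ℂ))⁻¹ * ∑ᶠ q ∈ {q : E × Bool | endv ι τ q = v}, η q,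
      funext fun p => congrFun hη p⟩
  · intro ξ
    rfl
end
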